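/- Let A, B be complex k×k matrices and v, w ∈ ℂᵏ with wv* = [A,B]. Let V₁ be the smallest subspace of ℂᵏ containing w and invariant under both A and B. If additionally ⟨v,w⟩ = 0, then v is orthogonal to V₁. -/

import Mathlib

open scoped Matrix

variable {k : ℕ}

lemma trace_mul_vmv (P : Matrix (Fin k) (Fin k) ℂ) (x u : Fin k → ℂ) :
    Matrix.trace (P * Matrix.vecMulVec x u) = u ⬝ᵥ (P *ᵥ x) := by
  simp only [Matrix.trace, Matrix.diag, Matrix.mul_apply, Matrix.vecMulVec_apply,
    Matrix.mulVec, dotProduct, Finset.mul_sum]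
  exact Finset.sum_congr rfl fun i _ => Finset.sum_congr rfl fun j _ => by ring

lemma vmv_mulVec (x u y : Fin k → ℂ) :
    Matrix.vecMulVec x u *ᵥ y = (u ⬝ᵥ y) • x := by
  funext i
  simp only [Matrix.mulVec, Matrix.vecMulVec_apply, dotProduct, Pi.smul_apply,
    smul_eq_mul, Finset.sum_mul, Finset.mul_sum]
  exact Finset.sum_congr rfl fun j _ => by ring

lemma key_outer (P Q : Matrix (Fin k) (Fin k) ℂ) (x u : Fin k → ℂ) :
    u ⬝ᵥ ((P * Matrix.vecMulVec x u * Q) *ᵥ x) = (u ⬝ᵥ (P *ᵥ x)) * (u ⬝ᵥ (Q *ᵥ x)) := by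
  rw [← Matrix.mulVec_mulVec, ← Matrix.mulVec_mulVec, vmv_mulVec, Matrix.mulVec_smul,
    dotProduct_smul, smul_eq_mul, mul_comm]

lemma count_add_count {α} [DecidableEq α] {A B : α} (hAB : A ≠ B) :
    ∀ l : List α, (∀ x ∈ l, x = A ∨ x = B) → l.count A + l.count B = l.length := by
  intro l hl
  induction l with
  | nil => simp
  | cons x t ih =>
    have ht := ih fun y hy => hl y (List.mem_cons_of_mem _ hy)
    rcases hl x (List.mem_cons_self) with rfl | rfl <;>
      simp [List.count_cons, hAB, Ne.symm hAB] <;> omega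

lemma words_zero (A B : Matrix (Fin k) (Fin k) ℂ) (v w : Fin k → ℂ)
    (houter : Matrix.vecMulVec w (star v) = A * B - B * A)
    (hvw : star v ⬝ᵥ w = 0) :
    ∀ (n : ℕ) (l : List (Matrix (Fin k) (Fin k) ℂ)), (∀ X ∈ l, X = A ∨ X = B) →
      l.length ≤ n → star v ⬝ᵥ (l.prod *ᵥ w) = 0 := by
  by_cases hAB : A = B
  · -- degenerate case: the outer product is zero
    have hW : Matrix.vecMulVec w (star v) = 0 := by rw [houter, hAB, sub_self]
    have h0 : ∀ i j, w i * star v j = 0 := fun i j => by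
      have := congrFun (congrFun hW i) j
      simpa only [Matrix.vecMulVec_apply, Matrix.zero_apply] using this
    intro n l _ _
    simp only [dotProduct, Matrix.mulVec, Finset.mul_sum]
    refine Finset.sum_eq_zero fun j _ => Finset.sum_eq_zero fun i _ => ?_
    calc star v j * (l.prod j i * w i) = l.prod j i * (w i * star v j) := by ring
      _ = 0 := by rw [h0, mul_zero]
  have hBA' : B ≠ A := Ne.symm hAB
  intro n
  induction n with
  | zero =>
    intro l _ hlen
    have : l = [] := List.length_eq_zero_iff.mp (Nat.le_zero.mp hlen)
    subst this
    simpa using hvw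
  | succ n IH =>
    intro l hl hlen
    rcases Nat.lt_or_ge l.length (n + 1) with hc | hc
    · exact IH l hl (Nat.lt_succ_iff.mp hc)
    have hlen' : l.length = n + 1 := le_antisymm hlen hc
    -- swap lemma
    have hswap : ∀ p q : List (Matrix (Fin k) (Fin k) ℂ), (∀ X ∈ p, X = A ∨ X = B) →
        p.length ≤ n →
        star v ⬝ᵥ ((p ++ A :: B :: q).prod *ᵥ w) = star v ⬝ᵥ ((p ++ B :: A :: q).prod *ᵥ w) := by
      intro p q hp hplen
      have e := key_outer p.prod q.prod w (star v)
      rw [houter] at e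
      have e2 : p.prod * (A * B - B * A) * q.prod
          = (p ++ A :: B :: q).prod - (p ++ B :: A :: q).prod := by
        simp only [List.prod_append, List.prod_cons]
        noncomm_ring
      rw [e2, Matrix.sub_mulVec, dotProduct_sub, IH p hp hplen, zero_mul] at e
      exact sub_eq_zero.mp e
    -- permutation invariance
    have hperm : ∀ (l₁ l₂ : List (Matrix (Fin k) (Fin k) ℂ)), l₁.Perm l₂ →
        ∀ p : List (Matrix (Fin k) (Fin k) ℂ), (∀ X ∈ p ++ l₁, X = A ∨ X = B) →
        (p ++ l₁).length ≤ n + 1 →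
        star v ⬝ᵥ ((p ++ l₁).prod *ᵥ w) = star v ⬝ᵥ ((p ++ l₂).prod *ᵥ w) := by
      intro l₁ l₂ hp12
      induction hp12 with
      | nil => intro p _ _; rfl
      | cons x h ih =>
        rename_i l₁' l₂'
        intro p hmem hlen2
        rw [List.append_cons p x l₁', List.append_cons p x l₂']
        refine ih (p ++ [x]) ?_ ?_
        · rw [← List.append_cons]; exact hmem
        · rw [← List.append_cons]; exact hlen2
      | swap x y t =>
        intro p hmem hlen2
        have hx : x = A ∨ x = B := hmem x (by simp)
        have hy : y = A ∨ y = B := hmem y (by simp)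
        have hp : ∀ X ∈ p, X = A ∨ X = B := fun X hX => hmem X (by simp [hX])
        have hplen : p.length ≤ n := by
          simp only [List.length_append, List.length_cons] at hlen2
          omega
        rcases hx with rfl | rfl <;> rcases hy with rfl | rfl
        · rfl
        · exact (hswap p t hp hplen).symm
        · exact hswap p t hp hplen
        · rfl
      | trans h₁ h₂ ih₁ ih₂ =>
        rename_i l₁' l₂' l₃'
        intro p hmem hlen2
        have hmem' : ∀ X ∈ p ++ l₂', X = A ∨ X = B := by
          intro X hX
          rcases List.mem_append.mp hX with h | h
          · exact hmem X (List.mem_append.mpr (Or.inl h))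
          · exact hmem X (List.mem_append.mpr (Or.inr (h₁.mem_iff.mpr h)))
        have hlen'' : (p ++ l₂').length ≤ n + 1 := by
          simp only [List.length_append] at hlen2 ⊢
          rw [← h₁.length_eq]
          exact hlen2
        exact (ih₁ p hmem hlen2).trans (ih₂ p hmem' hlen'')
    obtain ⟨a, ha⟩ : ∃ a, l.count A = a := ⟨_, rfl⟩
    obtain ⟨b, hb⟩ : ∃ b, l.count B = b := ⟨_, rfl⟩
    have hab : a + b = n + 1 := by
      rw [← ha, ← hb, count_add_count hAB l hl, hlen']
    -- value on any list that is a permutation of the sorted word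
    have hval : ∀ m : List (Matrix (Fin k) (Fin k) ℂ),
        m.Perm (List.replicate a A ++ List.replicate b B) → (∀ X ∈ m, X = A ∨ X = B) →
        star v ⬝ᵥ (m.prod *ᵥ w)
          = star v ⬝ᵥ ((List.replicate a A ++ List.replicate b B).prod *ᵥ w) := by
      intro m hm hmem
      have hlenm : m.length ≤ n + 1 := by
        rw [hm.length_eq]
        simp [hab]
      exact hperm m _ hm [] hmem hlenm
    have hsort : l.Perm (List.replicate a A ++ List.replicate b B) := by
      rw [List.perm_iff_count]
      intro x
      simp only [List.count_append, List.count_replicate, beq_iff_eq]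
      by_cases hxA : x = A
      · subst hxA
        simp [hAB, hBA', ha]
      · by_cases hxB : x = B
        · subst hxB
          simp [hAB, hBA', hb]
        · have hxl : x ∉ l := fun hm => by rcases hl x hm with rfl | rfl <;> simp_all
          have h1 : A ≠ x := fun h => hxA h.symm
          have h2 : B ≠ x := fun h => hxB h.symm
          simp [List.count_eq_zero.mpr hxl, h1, h2]
    have hpermBAB : ∀ c d : ℕ, c + d = b →
        (List.replicate c B ++ (List.replicate a A ++ List.replicate d B)).Perm
          (List.replicate a A ++ List.replicate b B) := by
      intro c d hcd
      rw [List.perm_iff_count]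
      intro x
      simp only [List.count_append, List.count_replicate, beq_iff_eq]
      by_cases hxA : x = A
      · subst hxA
        simp [hAB, hBA']
      · by_cases hxB : x = B
        · subst hxB
          simp [hAB, hBA']
          omega
        · have h1 : A ≠ x := fun h => hxA h.symm
          have h2 : B ≠ x := fun h => hxB h.symm
          simp [h1, h2]
    have hmemBAB : ∀ c d : ℕ, ∀ X ∈ (List.replicate c B ++ (List.replicate a A ++ List.replicate d B)),
        X = A ∨ X = B := by
      intro c d X hX
      simp only [List.mem_append, List.mem_replicate] at hX
      tauto
    -- the value of the sorted word
    set g := star v ⬝ᵥ ((List.replicate a A ++ List.replicate b B).prod *ᵥ w) with hgdef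
    have hprod : (List.replicate a A ++ List.replicate b B).prod = A ^ a * B ^ b := by
      simp [List.prod_append, List.prod_replicate]
    have hBAeq : B * A = A * B - Matrix.vecMulVec w (star v) := by
      rw [houter]; noncomm_ring
    have htr : ∀ j : ℕ, j ≤ b →
        Matrix.trace (A ^ a * B ^ j * A * B ^ (b + 1 - j))
          = Matrix.trace (A ^ a * A * B ^ (b + 1)) - (j : ℂ) * g := by
      intro j
      induction j with
      | zero => intro _; simp
      | succ j ihj =>
        intro hj
        have hj' : j ≤ b := Nat.le_of_succ_le hj
        have hb1 : b + 1 - j = (b - j) + 1 := by omega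
        have hb2 : b + 1 - (j + 1) = b - j := by omega
        have e1 : A ^ a * B ^ (j + 1) * A * B ^ (b + 1 - (j + 1))
            = A ^ a * B ^ j * A * B ^ (b + 1 - j)
              - A ^ a * B ^ j * Matrix.vecMulVec w (star v) * B ^ (b - j) := by
          calc A ^ a * B ^ (j + 1) * A * B ^ (b + 1 - (j + 1))
              = A ^ a * B ^ j * (B * A) * B ^ (b - j) := by
                rw [hb2, pow_succ]; simp only [mul_assoc]
            _ = A ^ a * B ^ j * (A * B - Matrix.vecMulVec w (star v)) * B ^ (b - j) := by
                rw [hBAeq]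
            _ = A ^ a * B ^ j * A * B ^ (b + 1 - j)
              - A ^ a * B ^ j * Matrix.vecMulVec w (star v) * B ^ (b - j) := by
                rw [hb1, pow_succ']
                simp only [mul_sub, sub_mul, mul_assoc]
        have e2 : Matrix.trace (A ^ a * B ^ j * Matrix.vecMulVec w (star v) * B ^ (b - j)) = g := by
          rw [Matrix.trace_mul_comm]
          have : B ^ (b - j) * (A ^ a * B ^ j * Matrix.vecMulVec w (star v))
              = (B ^ (b - j) * A ^ a * B ^ j) * Matrix.vecMulVec w (star v) := by
            simp only [mul_assoc]
          rw [this, trace_mul_vmv]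
          have hp : (List.replicate (b - j) B ++ (List.replicate a A ++ List.replicate j B)).prod
              = B ^ (b - j) * A ^ a * B ^ j := by
            simp [List.prod_append, List.prod_replicate, mul_assoc]
          rw [← hp, hval _ (hpermBAB _ _ (by omega)) (hmemBAB _ _)]
        rw [e1, Matrix.trace_sub, ihj hj', e2]
        push_cast
        ring
    -- g = - b * g
    have hgval : g = - (b : ℂ) * g := by
      have t1 : g = Matrix.trace (A ^ a * B ^ b * (A * B - B * A)) := by
        rw [← houter, hgdef, hprod, ← trace_mul_vmv]
      have t2 : A ^ a * B ^ b * (A * B - B * A)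
          = A ^ a * B ^ b * A * B ^ (b + 1 - b) - (A ^ a * B ^ b * B) * A := by
        have : b + 1 - b = 1 := by omega
        rw [this, pow_one]
        noncomm_ring
      have t3 : Matrix.trace ((A ^ a * B ^ b * B) * A) = Matrix.trace (A ^ a * A * B ^ (b + 1)) := by
        rw [Matrix.trace_mul_comm]
        congr 1
        calc A * (A ^ a * B ^ b * B) = (A * A ^ a) * (B ^ b * B) := by simp only [mul_assoc]
          _ = A ^ a * A * B ^ (b + 1) := by rw [← pow_succ', ← pow_succ, ← pow_succ]
      calc g = Matrix.trace (A ^ a * B ^ b * (A * B - B * A)) := t1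
        _ = Matrix.trace (A ^ a * B ^ b * A * B ^ (b + 1 - b))
            - Matrix.trace (A ^ a * B ^ b * B * A) := by rw [t2, Matrix.trace_sub]
        _ = (Matrix.trace (A ^ a * A * B ^ (b + 1)) - (b : ℂ) * g)
            - Matrix.trace (A ^ a * A * B ^ (b + 1)) := by rw [htr b le_rfl, t3]
        _ = - (b : ℂ) * g := by ring
    have hgzero : g = 0 := by
      have h1 : (1 + (b : ℂ)) * g = 0 := by linear_combination hgval
      have h2 : (1 + (b : ℂ)) ≠ 0 := by
        have := Nat.cast_add_one_ne_zero (R := ℂ) b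
        rwa [add_comm] at this
      exact (mul_eq_zero.mp h1).resolve_left h2
    calc star v ⬝ᵥ (l.prod *ᵥ w) = g := hval l hsort hl
      _ = 0 := hgzero

/-- If `w v* = [A,B]` and `⟨v,w⟩ = 0`, then `v` is orthogonal to the smallest
subspace `V₁` of `ℂᵏ` containing `w` and invariant under `A` and `B`, namely the
span of all vectors `C w` where `C` ranges over words in `A` and `B`. -/
theorem orthogonal_to_smallest_invariant_subspace
    {k : ℕ} (A B : Matrix (Fin k) (Fin k) ℂ) (v w : Fin k → ℂ)
    (houter : Matrix.vecMulVec w (star v) = A * B - B * A)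
    (hvw : star v ⬝ᵥ w = 0) :
    ∀ x ∈ Submodule.span ℂ {x : Fin k → ℂ |
        ∃ l : List (Matrix (Fin k) (Fin k) ℂ),
          (∀ M ∈ l, M = A ∨ M = B) ∧ x = l.prod *ᵥ w},
      star v ⬝ᵥ x = 0 := by
  intro x hx
  refine Submodule.span_induction ?_ ?_ ?_ ?_ hx
  · rintro y ⟨l, hl, rfl⟩
    exact words_zero A B v w houter hvw l.length l hl le_rfl
  · simp
  · intro y z _ _ hy hz
    rw [dotProduct_add, hy, hz, add_zero]
  · intro c y _ hy
    rw [dotProduct_smul, hy, smul_zero]
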